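/- For A > 0 and w ∈ ℂ with |w| = 1 and Re(w) > 0, define J_{0,±} := 2Aw ∫_{1/2±1}^{∞} e^{-Awx²} dx (sign + gives lower limit 3/2, sign − gives lower limit −1/2). Then there exists c > 0 (independent of A and w) such that J_{0,−} = 2√(πAw) + O(√A · e^{-cA·Re(w)} / √(Re(w))) and J_{0,+} = O(√A · e^{-cA·Re(w)} / √(Re(w))). -/

import Mathlib

open Complex Real

open MeasureTheory

lemma sqrt_id {A : ℝ} (hA : 0 < A) {w : ℂ} (hw : w ≠ 0) (harg : w.arg ≠ Real.pi) :
    ((Real.pi : ℂ) * A * w) ^ (1 / 2 : ℂ)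
      = (A : ℂ) * w * ((Real.pi : ℂ) / ((A : ℂ) * w)) ^ (1 / 2 : ℂ) := by
  have hπ : (0:ℝ) < Real.pi := Real.pi_pos
  have h1 : ((Real.pi : ℂ) * A * w) = ((Real.pi * A : ℝ) : ℂ) * w := by push_cast; ring
  have h2 : (Real.pi : ℂ) / ((A : ℂ) * w) = ((Real.pi / A : ℝ) : ℂ) * w⁻¹ := by
    push_cast; field_simp
  have hπA : (0:ℝ) < Real.pi * A := by positivity
  have hπdA : (0:ℝ) < Real.pi / A := by positivity
  have hz1 : ((Real.pi * A : ℝ) : ℂ) * w ≠ 0 := by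
    apply mul_ne_zero _ hw
    exact_mod_cast hπA.ne'
  have hz2 : ((Real.pi / A : ℝ) : ℂ) * w⁻¹ ≠ 0 := by
    apply mul_ne_zero _ (inv_ne_zero hw)
    exact_mod_cast hπdA.ne'
  rw [h1, h2, Complex.cpow_def_of_ne_zero hz1, Complex.cpow_def_of_ne_zero hz2,
    Complex.log_ofReal_mul hπA hw, Complex.log_ofReal_mul hπdA (inv_ne_zero hw),
    Complex.log_inv w harg]
  have hAe : Complex.exp ((Real.log A : ℝ) : ℂ) = (A : ℂ) := by
    rw [← Complex.ofReal_exp, Real.exp_log hA]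
  have key : (A : ℂ) * w * Complex.exp ((↑(Real.log (Real.pi / A)) + -Complex.log w) * (1/2))
      = Complex.exp (↑(Real.log A) + Complex.log w
          + (↑(Real.log (Real.pi / A)) + -Complex.log w) * (1/2)) := by
    rw [Complex.exp_add, Complex.exp_add, hAe, Complex.exp_log hw]
  rw [key]
  congr 1
  have e1 : Real.log (Real.pi * A) = Real.log Real.pi + Real.log A :=
    Real.log_mul hπ.ne' hA.ne'
  have e2 : Real.log (Real.pi / A) = Real.log Real.pi - Real.log A :=
    Real.log_div hπ.ne' hA.ne'
  rw [e1, e2]; push_cast; ring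

lemma tail_bound {B : ℝ} (hB : 0 < B) {s : Set ℝ} (hs : MeasurableSet s)
    (hsub : ∀ x ∈ s, (1:ℝ)/4 ≤ x ^ 2) :
    ∫ x in s, Real.exp (-B * x ^ 2) ≤ Real.exp (-B/8) * Real.sqrt (2 * Real.pi / B) := by
  have h2 : (0:ℝ) < B/2 := by linarith
  have hint : Integrable (fun x : ℝ => Real.exp (-(B/2) * x ^ 2)) := integrable_exp_neg_mul_sq h2
  calc ∫ x in s, Real.exp (-B * x ^ 2)
      ≤ ∫ x in s, Real.exp (-B/8) * Real.exp (-(B/2) * x ^ 2) := by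
        apply setIntegral_mono_on (integrable_exp_neg_mul_sq hB).integrableOn
          (hint.const_mul _).integrableOn hs
        intro x hx
        rw [← Real.exp_add]
        apply Real.exp_le_exp.mpr
        nlinarith [hsub x hx]
    _ = Real.exp (-B/8) * ∫ x in s, Real.exp (-(B/2) * x ^ 2) := by
        rw [integral_const_mul]
    _ ≤ Real.exp (-B/8) * ∫ x : ℝ, Real.exp (-(B/2) * x ^ 2) := by
        apply mul_le_mul_of_nonneg_left _ (Real.exp_pos _).le
        exact setIntegral_le_integral hint (Filter.Eventually.of_forall fun x => (Real.exp_pos _).le)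
    _ = Real.exp (-B/8) * Real.sqrt (Real.pi / (B/2)) := by rw [integral_gaussian]
    _ = Real.exp (-B/8) * Real.sqrt (2 * Real.pi / B) := by ring_nf

lemma arith {A r : ℝ} (hA : 0 < A) (hr : 0 < r) :
    2 * A * (Real.exp (-(A*r)/8) * Real.sqrt (2 * Real.pi / (A * r)))
      ≤ 6 * Real.sqrt A * Real.exp (-(1/8 * A * r)) / Real.sqrt r := by
  have hexp : Real.exp (-(A*r)/8) = Real.exp (-(1/8 * A * r)) := by ring_nf
  have h1 : Real.sqrt (2 * Real.pi / (A * r))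
      = Real.sqrt (2 * Real.pi) / (Real.sqrt A * Real.sqrt r) := by
    rw [Real.sqrt_div (by positivity), Real.sqrt_mul hA.le]
  have h2 : Real.sqrt (2 * Real.pi) ≤ 3 := by
    rw [show (3:ℝ) = Real.sqrt 9 by rw [show (9:ℝ) = 3^2 by norm_num, Real.sqrt_sq (by norm_num)]]
    apply Real.sqrt_le_sqrt
    nlinarith [Real.pi_le_four]
  have h3 : A / Real.sqrt A = Real.sqrt A := Real.div_sqrt
  have hsA : 0 < Real.sqrt A := Real.sqrt_pos.mpr hA
  have hsr : 0 < Real.sqrt r := Real.sqrt_pos.mpr hr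
  rw [hexp, h1]
  have hE : 0 < Real.exp (-(1/8 * A * r)) := Real.exp_pos _
  calc 2 * A * (Real.exp (-(1/8 * A * r)) * (Real.sqrt (2 * Real.pi) / (Real.sqrt A * Real.sqrt r)))
      = 2 * Real.sqrt (2 * Real.pi) * Real.exp (-(1/8 * A * r)) * (A / Real.sqrt A) / Real.sqrt r := by
        field_simp
    _ = 2 * Real.sqrt (2 * Real.pi) * Real.exp (-(1/8 * A * r)) * Real.sqrt A / Real.sqrt r := by
        rw [h3]
    _ ≤ 6 * Real.sqrt A * Real.exp (-(1/8 * A * r)) / Real.sqrt r := by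
        rw [div_le_div_iff_of_pos_right hsr]
        nlinarith [mul_nonneg hE.le hsA.le]

/-- For `A > 0` and `w` on the unit circle with `Re w > 0`, the Gaussian integrals
`J_{0,±} := 2Aw ∫_{1/2±1}^∞ e^{-Awx²} dx` satisfy, with constants `c, C > 0` independent
of `A` and `w`: `J_{0,−} = 2√(πAw) + O(√A e^{-cA Re w}/√(Re w))` and
`J_{0,+} = O(√A e^{-cA Re w}/√(Re w))` (principal branch square root). -/
theorem gaussian_tail_integrals :
    ∃ c > (0 : ℝ), ∃ C > (0 : ℝ), ∀ A : ℝ, 0 < A → ∀ w : ℂ, ‖w‖ = 1 → 0 < w.re →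
      ‖(2 * (A : ℂ) * w
            * (∫ x in Set.Ioi ((1 : ℝ) / 2 - 1), Complex.exp (-(A : ℂ) * w * (x : ℂ) ^ 2))
          - 2 * ((Real.pi : ℂ) * A * w) ^ (1 / 2 : ℂ))‖
        ≤ C * Real.sqrt A * Real.exp (-c * A * w.re) / Real.sqrt w.re
      ∧ ‖(2 * (A : ℂ) * w
            * ∫ x in Set.Ioi ((1 : ℝ) / 2 + 1), Complex.exp (-(A : ℂ) * w * (x : ℂ) ^ 2))‖
        ≤ C * Real.sqrt A * Real.exp (-c * A * w.re) / Real.sqrt w.re := by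
  refine ⟨1/8, by norm_num, 6, by norm_num, ?_⟩
  intro A hA w hwabs hwre
  have hw0 : w ≠ 0 := by
    intro h; rw [h] at hwabs; simp at hwabs
  have harg : w.arg ≠ Real.pi := by
    intro h
    rw [Complex.arg_eq_pi_iff] at h
    linarith [h.1]
  have hbre : 0 < ((A : ℂ) * w).re := by
    have : ((A : ℂ) * w).re = A * w.re := by simp [Complex.mul_re]
    rw [this]; exact mul_pos hA hwre
  have hB : 0 < A * w.re := mul_pos hA hwre
  have hInt : Integrable (fun x : ℝ => Complex.exp (-((A : ℂ) * w) * (x : ℂ) ^ 2)) :=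
    integrable_cexp_neg_mul_sq hbre
  have hre : ∀ x : ℝ, (-((A : ℂ) * w) * (x : ℂ) ^ 2).re = -(A * w.re) * x ^ 2 := by
    intro x
    rw [show ((x : ℂ)) ^ 2 = ((x ^ 2 : ℝ) : ℂ) by push_cast; ring]
    simp only [Complex.neg_re, Complex.mul_re, Complex.ofReal_re, Complex.ofReal_im,
      mul_zero, sub_zero]
    ring
  have hnorm : ∀ s : Set ℝ, MeasurableSet s → (∀ x ∈ s, (1:ℝ)/4 ≤ x ^ 2) →
      ‖∫ x in s, Complex.exp (-((A : ℂ) * w) * (x : ℂ) ^ 2)‖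
        ≤ Real.exp (-(A * w.re)/8) * Real.sqrt (2 * Real.pi / (A * w.re)) := by
    intro s hs hsub
    calc ‖∫ x in s, Complex.exp (-((A : ℂ) * w) * (x : ℂ) ^ 2)‖
        ≤ ∫ x in s, ‖Complex.exp (-((A : ℂ) * w) * (x : ℂ) ^ 2)‖ :=
          norm_integral_le_integral_norm _
      _ = ∫ x in s, Real.exp (-(A * w.re) * x ^ 2) := by
          apply integral_congr_ae
          filter_upwards with x
          rw [Complex.norm_exp, hre x]
      _ ≤ _ := tail_bound hB hs hsub
  have hfull : ∫ x : ℝ, Complex.exp (-((A : ℂ) * w) * (x : ℂ) ^ 2)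
      = ((Real.pi : ℂ) / ((A : ℂ) * w)) ^ (1/2 : ℂ) := integral_gaussian_complex hbre
  have hsplit := intervalIntegral.integral_Iic_add_Ioi (b := (1:ℝ)/2 - 1) (μ := volume)
    hInt.integrableOn hInt.integrableOn
  have habs2Aw : ‖2 * (A : ℂ) * w‖ = 2 * A := by
    rw [norm_mul, norm_mul, hwabs, Complex.norm_of_nonneg hA.le, Complex.norm_two, mul_one]
  simp only [neg_mul]
  simp only [neg_mul] at hsplit hfull
  constructor
  · have key : 2 * (A : ℂ) * w
          * (∫ x in Set.Ioi ((1:ℝ)/2 - 1), Complex.exp (-((A : ℂ) * w * (x : ℂ) ^ 2)))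
          - 2 * ((Real.pi : ℂ) * A * w) ^ (1/2 : ℂ)
        = -(2 * (A : ℂ) * w
            * ∫ x in Set.Iic ((1:ℝ)/2 - 1), Complex.exp (-((A : ℂ) * w * (x : ℂ) ^ 2))) := by
      rw [sqrt_id hA hw0 harg, ← hfull, ← hsplit]
      ring
    rw [key, norm_neg, norm_mul, habs2Aw]
    have hsub : ∀ x ∈ Set.Iic ((1:ℝ)/2 - 1), (1:ℝ)/4 ≤ x ^ 2 := by
      intro x hx
      simp only [Set.mem_Iic] at hx
      nlinarith
    calc 2 * A * ‖(∫ x in Set.Iic ((1:ℝ)/2 - 1),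
            Complex.exp (-((A : ℂ) * w * (x : ℂ) ^ 2)))‖
        ≤ 2 * A * (Real.exp (-(A * w.re)/8) * Real.sqrt (2 * Real.pi / (A * w.re))) := by
          apply mul_le_mul_of_nonneg_left _ (by positivity)
          simpa only [neg_mul] using
            hnorm _ measurableSet_Iic hsub
      _ ≤ _ := arith hA hwre
  · rw [norm_mul, habs2Aw]
    have hsub : ∀ x ∈ Set.Ioi ((1:ℝ)/2 + 1), (1:ℝ)/4 ≤ x ^ 2 := by
      intro x hx
      simp only [Set.mem_Ioi] at hx
      nlinarith
    calc 2 * A * ‖(∫ x in Set.Ioi ((1:ℝ)/2 + 1),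
            Complex.exp (-((A : ℂ) * w * (x : ℂ) ^ 2)))‖
        ≤ 2 * A * (Real.exp (-(A * w.re)/8) * Real.sqrt (2 * Real.pi / (A * w.re))) := by
          apply mul_le_mul_of_nonneg_left _ (by positivity)
          simpa only [neg_mul] using
            hnorm _ measurableSet_Ioi hsub
      _ ≤ _ := arith hA hwre
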